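/- For all integers n ≥ 1 and k ≥ 1, we have f(n,k) ≥ ⌈H_n·k⌉, where H_n = ∑_{i=1}^n 1/i. -/

import Mathlib

open scoped Classical in
/-- `coverNumber n k` is the minimum size of a multiset `C` of coefficient vectors
`c ∈ ℝ^n` (each representing the hyperplane `{x : ∑ i, c i * x i = 1}`, which avoids
the origin) such that every nonzero point `x ∈ {0,1}^n` lies on at least `k` of the
hyperplanes, counted with multiplicity. -/
noncomputable def coverNumber (n k : ℕ) : ℕ :=
  sInf {m | ∃ C : Multiset (Fin n → ℝ),
    Multiset.card C = m ∧
    ∀ x : Fin n → ℝ, (∀ i, x i = 0 ∨ x i = 1) → x ≠ 0 →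
      k ≤ Multiset.card (C.filter (fun c => ∑ i, c i * x i = 1))}

/-- The `n`-th harmonic number, as a real number. -/
noncomputable def harmonicR (n : ℕ) : ℝ := ∑ i ∈ Finset.range n, 1 / ((i : ℝ) + 1)


open Finset
open Fin.NatCast Fin.CommRing

lemma rotation' (j : ℕ) [NeZero j] (e : Fin j → ℝ) (he : ∑ i, e i = 1) :
    ∃ r : Fin j, ∀ i : ℕ, 0 < i → i < j → ∑ l ∈ Finset.range i, e ((l : Fin j) + r) ≠ 1 := by
  have hj : 0 < j := Nat.pos_of_ne_zero (NeZero.ne j)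
  set F : ℕ → ℝ := fun m => ∑ l ∈ Finset.range m, e (l : Fin j) with hF
  have hstep : ∀ m i : ℕ, F (m + i) = F m + ∑ l ∈ Finset.range i, e ((m + l : ℕ) : Fin j) := by
    intro m i
    rw [hF]
    simp only
    rw [Finset.range_add, Finset.sum_union (by
      simp [Finset.disjoint_left]
      intro a ha b hb hba; omega)]
    congr 1
    rw [Finset.sum_map]
    rfl
  have hper : ∀ m, F (m + j) = F m + 1 := by
    intro m
    rw [hstep]
    congr 1
    have : ∀ l : ℕ, ((m + l : ℕ) : Fin j) = ((m : Fin j) + (l : Fin j)) := by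
      intro l; push_cast; ring
    simp_rw [this]
    rw [← Fin.sum_univ_eq_sum_range (fun l => e ((m : Fin j) + (l : Fin j)))]
    simp only [Fin.cast_val_eq_self]
    rw [← he]
    exact Equiv.sum_comp (Equiv.addLeft (m : Fin j)) e
  obtain ⟨r0, hr0mem, hr0max⟩ := Finset.exists_max_image (Finset.range j) F ⟨0, by simp [hj]⟩
  classical
  set s := (Finset.range j).filter (fun m => ∀ m' ∈ Finset.range j, F m' ≤ F m) with hs
  have hsne : s.Nonempty := ⟨r0, by rw [hs, Finset.mem_filter]; exact ⟨hr0mem, hr0max⟩⟩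
  set r1 := s.min' hsne with hr1
  have hr1mem : r1 ∈ s := s.min'_mem hsne
  have hr1lt : r1 < j := by
    have := (Finset.mem_filter.1 hr1mem).1; simpa using this
  have hr1max : ∀ m' ∈ Finset.range j, F m' ≤ F r1 := (Finset.mem_filter.1 hr1mem).2
  have hr1first : ∀ m < r1, F m < F r1 := by
    intro m hm
    rcases lt_or_ge (F m) (F r1) with h | h
    · exact h
    · exfalso
      have hmmem : m ∈ Finset.range j := by simp; omega
      have heq : F m = F r1 := le_antisymm (hr1max m hmmem) h
      have : m ∈ s := by
        rw [hs, Finset.mem_filter]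
        exact ⟨hmmem, fun m' hm' => heq ▸ hr1max m' hm'⟩
      have := s.min'_le m this
      omega
  refine ⟨⟨r1, hr1lt⟩, ?_⟩
  intro i hi hij
  have hsum : ∑ l ∈ Finset.range i, e ((l : Fin j) + ⟨r1, hr1lt⟩) = F (r1 + i) - F r1 := by
    rw [hstep, add_sub_cancel_left]
    apply Finset.sum_congr rfl
    intro l _
    congr 1
    have h1 : ((r1 + l : ℕ) : Fin j) = ((r1 : Fin j) + (l : Fin j)) := by push_cast; ring
    have h2 : (r1 : Fin j) = ⟨r1, hr1lt⟩ := by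
      apply Fin.ext; simp [Nat.mod_eq_of_lt hr1lt]
    rw [h1, h2, add_comm]
  rw [hsum]
  rcases lt_or_ge (r1 + i) j with h | h
  · have : F (r1 + i) ≤ F r1 := hr1max _ (by simp [h])
    intro hcon; linarith
  · have hsub : r1 + i - j < r1 := by omega
    have heq : F (r1 + i) = F (r1 + i - j) + 1 := by
      have h3 : r1 + i = (r1 + i - j) + j := by omega
      conv_lhs => rw [h3]
      exact hper _
    rw [heq]
    have := hr1first _ hsub
    intro hcon; linarith

open Classical in
lemma goodCount (j : ℕ) [NeZero j] (e : Fin j → ℝ) (he : ∑ i, e i = 1) :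
    (j - 1).factorial ≤ (univ.filter (fun π : Equiv.Perm (Fin j) =>
      ∀ i : ℕ, 0 < i → i < j → ∑ l ∈ Finset.range i, e (π (l : Fin j)) ≠ 1)).card := by
  have hj : 0 < j := Nat.pos_of_ne_zero (NeZero.ne j)
  have hsum : ∀ π : Equiv.Perm (Fin j), ∑ i, (e ∘ π) i = 1 := fun π => by
    rw [← he]; exact Equiv.sum_comp π e
  set r : Equiv.Perm (Fin j) → Fin j := fun π => (rotation' j (e ∘ π) (hsum π)).choose with hr
  have hrspec : ∀ π : Equiv.Perm (Fin j), ∀ i : ℕ, 0 < i → i < j →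
      ∑ l ∈ Finset.range i, (e ∘ π) ((l : Fin j) + r π) ≠ 1 :=
    fun π => (rotation' j (e ∘ π) (hsum π)).choose_spec
  set Φ : Equiv.Perm (Fin j) → Equiv.Perm (Fin j) := fun π => π * Equiv.addRight (r π) with hΦ
  set Good := univ.filter (fun π : Equiv.Perm (Fin j) =>
      ∀ i : ℕ, 0 < i → i < j → ∑ l ∈ Finset.range i, e (π (l : Fin j)) ≠ 1) with hG
  have himg : (univ : Finset (Equiv.Perm (Fin j))).image Φ ⊆ Good := by
    intro g hg
    rw [Finset.mem_image] at hg
    obtain ⟨π, _, hπ⟩ := hg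
    rw [hG, Finset.mem_filter]
    refine ⟨Finset.mem_univ _, ?_⟩
    intro i hi hij
    have := hrspec π i hi hij
    rw [← hπ, hΦ]
    simpa [Equiv.Perm.mul_apply] using this
  have hfib : ∀ g ∈ (univ : Finset (Equiv.Perm (Fin j))).image Φ,
      (univ.filter (fun π => Φ π = g)).card ≤ j := by
    intro g _
    have hsub : univ.filter (fun π => Φ π = g) ⊆
        (univ : Finset (Fin j)).image (fun t => g * (Equiv.addRight t)⁻¹) := by
      intro π hπ
      rw [Finset.mem_filter] at hπ
      rw [Finset.mem_image]
      refine ⟨r π, Finset.mem_univ _, ?_⟩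
      rw [← hπ.2, hΦ]
      group
    calc (univ.filter (fun π => Φ π = g)).card
        ≤ ((univ : Finset (Fin j)).image (fun t => g * (Equiv.addRight t)⁻¹)).card :=
          Finset.card_le_card hsub
      _ ≤ (univ : Finset (Fin j)).card := Finset.card_image_le
      _ = j := by simp
  have hkey : (univ : Finset (Equiv.Perm (Fin j))).card ≤ j * ((univ : Finset (Equiv.Perm (Fin j))).image Φ).card :=
    Finset.card_le_mul_card_image univ j hfib
  have hcard : (univ : Finset (Equiv.Perm (Fin j))).card = j.factorial := by
    rw [Finset.card_univ, Fintype.card_perm, Fintype.card_fin]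
  have hfac : j.factorial = j * (j - 1).factorial := by
    cases j with
    | zero => omega
    | succ m => simp [Nat.factorial_succ]
  have : j * (j-1).factorial ≤ j * Good.card := by
    rw [← hfac, ← hcard]
    exact hkey.trans (Nat.mul_le_mul_left j (Finset.card_le_card himg))
  exact Nat.le_of_mul_le_mul_left this hj

open Classical in
lemma blockCount (n : ℕ) [NeZero n] (c : Fin n → ℝ) (S : Finset (Fin n))
    (hS : S.Nonempty) (hcS : ∑ i ∈ S, c i = 1) :
    (S.card - 1).factorial * (n - S.card).factorial ≤
    (univ.filter (fun σ : Equiv.Perm (Fin n) =>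
      ((Finset.range S.card).image (fun l : ℕ => σ ((l : Fin n)))) = S ∧
      ∀ i : ℕ, 0 < i → i < S.card → ∑ l ∈ Finset.range i, c (σ (l : Fin n)) ≠ 1)).card := by
  set j := S.card with hj
  have hj0 : 0 < j := Finset.card_pos.2 hS
  haveI : NeZero j := ⟨hj0.ne'⟩
  have hjn : j ≤ n := by
    simpa using Finset.card_le_card (Finset.subset_univ S)
  have hn0 : 0 < n := Nat.pos_of_ne_zero (NeZero.ne n)
  have hcompl : Sᶜ.card = n - j := by
    rw [Finset.card_compl, Fintype.card_fin, hj]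
  set u : Fin j ≃o S := S.orderIsoOfFin rfl with hu
  set v : Fin (n - j) ≃o (Sᶜ : Finset (Fin n)) := Sᶜ.orderIsoOfFin hcompl with hv
  set e : Fin j → ℝ := fun a => c (u a) with he'
  have he : ∑ a, e a = 1 := by
    rw [← hcS]
    rw [← Finset.sum_coe_sort S c]
    exact Equiv.sum_comp u.toEquiv (fun x : S => c x)
  -- the glue map
  set Fn : Equiv.Perm (Fin j) × Equiv.Perm (Fin (n - j)) → Fin n → Fin n :=
    fun p i => if h : (i : ℕ) < j then (u (p.1 ⟨i, h⟩) : Fin n)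
      else (v (p.2 ⟨(i : ℕ) - j, by omega⟩) : Fin n) with hFn
  have hFinj : ∀ p, Function.Injective (Fn p) := by
    intro p i i' hii
    rw [hFn] at hii
    simp only at hii
    by_cases h1 : (i : ℕ) < j <;> by_cases h2 : (i' : ℕ) < j
    · rw [dif_pos h1, dif_pos h2] at hii
      have h3 := p.1.injective (u.injective (Subtype.coe_injective hii))
      have h4 : (i : ℕ) = (i' : ℕ) := congrArg (fun z : Fin j => z.val) h3
      exact Fin.ext h4
    · rw [dif_pos h1, dif_neg h2] at hii
      exfalso
      have hmem := (u (p.1 ⟨i, h1⟩)).2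
      have hmem' := (v (p.2 ⟨(i' : ℕ) - j, by omega⟩)).2
      rw [hii] at hmem
      rw [Finset.mem_compl] at hmem'
      exact hmem' hmem
    · rw [dif_neg h1, dif_pos h2] at hii
      exfalso
      have hmem := (u (p.1 ⟨i', h2⟩)).2
      have hmem' := (v (p.2 ⟨(i : ℕ) - j, by omega⟩)).2
      rw [← hii] at hmem
      rw [Finset.mem_compl] at hmem'
      exact hmem' hmem
    · rw [dif_neg h1, dif_neg h2] at hii
      have h3 := p.2.injective (v.injective (Subtype.coe_injective hii))
      have h4 : (i : ℕ) - j = (i' : ℕ) - j := congrArg (fun z : Fin (n-j) => z.val) h3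
      have hi := i.isLt
      have hi' := i'.isLt
      exact Fin.ext (by omega)
  set Glue : Equiv.Perm (Fin j) × Equiv.Perm (Fin (n - j)) → Equiv.Perm (Fin n) :=
    fun p => Equiv.ofBijective (Fn p) (Finite.injective_iff_bijective.1 (hFinj p)) with hGlue
  have hGlueApp : ∀ p i, Glue p i = Fn p i := fun p i => rfl
  have hsmall : ∀ p, ∀ l : ℕ, (hl : l < j) → Glue p (l : Fin n) = (u (p.1 ⟨l, hl⟩) : Fin n) := by
    intro p l hl
    rw [hGlueApp, hFn]
    simp only [Fin.val_natCast, Nat.mod_eq_of_lt (show l < n from lt_of_lt_of_le hl hjn),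
      dif_pos hl]
  set Good := univ.filter (fun π : Equiv.Perm (Fin j) =>
      ∀ i : ℕ, 0 < i → i < j → ∑ l ∈ Finset.range i, e (π (l : Fin j)) ≠ 1) with hGood
  set Target := univ.filter (fun σ : Equiv.Perm (Fin n) =>
      ((Finset.range j).image (fun l : ℕ => σ ((l : Fin n)))) = S ∧
      ∀ i : ℕ, 0 < i → i < j → ∑ l ∈ Finset.range i, c (σ (l : Fin n)) ≠ 1) with hT
  have himg : (Good ×ˢ (univ : Finset (Equiv.Perm (Fin (n - j))))).image Glue ⊆ Target := by
    intro g hg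
    rw [Finset.mem_image] at hg
    obtain ⟨p, hp, hpg⟩ := hg
    have hp1 : p.1 ∈ Good := (Finset.mem_product.1 hp).1
    rw [hGood, Finset.mem_filter] at hp1
    rw [hT, Finset.mem_filter]
    refine ⟨Finset.mem_univ _, ?_, ?_⟩
    · -- image of range j is S
      apply Finset.eq_of_subset_of_card_le
      · intro x hx
        rw [Finset.mem_image] at hx
        obtain ⟨l, hl, hlx⟩ := hx
        rw [Finset.mem_range] at hl
        rw [← hpg, hsmall p l hl] at hlx
        rw [← hlx]
        exact (u (p.1 ⟨l, hl⟩)).2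
      · have hinj : Set.InjOn (fun l : ℕ => g ((l : Fin n))) (Finset.range j) := by
          intro a ha b hb hab
          rw [Finset.mem_coe, Finset.mem_range] at ha hb
          have h5 : (a : Fin n) = (b : Fin n) := g.injective hab
          have h6 := congrArg Fin.val h5
          rw [Fin.val_natCast, Fin.val_natCast, Nat.mod_eq_of_lt (lt_of_lt_of_le ha hjn),
            Nat.mod_eq_of_lt (lt_of_lt_of_le hb hjn)] at h6
          exact h6
        rw [Finset.card_image_of_injOn hinj, Finset.card_range]
    · -- prefix sums avoid 1
      intro i hi hij
      have hgood := hp1.2 i hi hij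
      have hsame : ∑ l ∈ Finset.range i, c (g (l : Fin n))
          = ∑ l ∈ Finset.range i, e (p.1 (l : Fin j)) := by
        apply Finset.sum_congr rfl
        intro l hl
        rw [Finset.mem_range] at hl
        have hlj : l < j := lt_trans hl hij
        have hcast : ((l : ℕ) : Fin j) = ⟨l, hlj⟩ :=
          Fin.ext (by simp [Fin.val_natCast, Nat.mod_eq_of_lt hlj])
        rw [← hpg, hsmall p l hlj, he', hcast]
      rw [hsame]
      exact hgood
  -- injectivity of Glue
  have hGlueInj : Function.Injective Glue := by
    intro p p' hpp
    have h1 : p.1 = p'.1 := by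
      apply Equiv.ext
      intro a
      have ha : (a : ℕ) < j := a.isLt
      have e1 := hsmall p a ha
      have e2 := hsmall p' a ha
      rw [hpp] at e1
      have e3 := u.injective (Subtype.coe_injective (e1.symm.trans e2))
      simpa using e3
    have h2 : p.2 = p'.2 := by
      apply Equiv.ext
      intro b
      have hb : j + (b : ℕ) < n := by have := b.isLt; omega
      have key : ∀ q : Equiv.Perm (Fin j) × Equiv.Perm (Fin (n - j)),
          Glue q ⟨j + (b : ℕ), hb⟩ = (v (q.2 b) : Fin n) := by
        intro q
        rw [hGlueApp, hFn]
        simp only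
        rw [dif_neg (by simp)]
        have hbb : (⟨j + (b : ℕ) - j, by have := b.isLt; omega⟩ : Fin (n - j)) = b :=
          Fin.ext (by simp)
        rw [hbb]
      have e1 := key p
      have e2 := key p'
      rw [hpp] at e1
      exact v.injective (Subtype.coe_injective (e1.symm.trans e2))
    exact Prod.ext h1 h2
  -- count
  calc (j - 1).factorial * (n - j).factorial
      ≤ Good.card * (n - j).factorial :=
        Nat.mul_le_mul_right _ (goodCount j e he)
    _ = (Good ×ˢ (univ : Finset (Equiv.Perm (Fin (n - j))))).card := by
        rw [Finset.card_product, Finset.card_univ, Fintype.card_perm, Fintype.card_fin]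
    _ = ((Good ×ˢ (univ : Finset (Equiv.Perm (Fin (n - j))))).image Glue).card :=
        (Finset.card_image_of_injective _ hGlueInj).symm
    _ ≤ Target.card := Finset.card_le_card himg

open Classical in
lemma keyA_nat (n : ℕ) [NeZero n] (c : Fin n → ℝ) :
    ∑ S ∈ univ.filter (fun S : Finset (Fin n) => S.Nonempty ∧ ∑ i ∈ S, c i = 1),
      (S.card - 1).factorial * (n - S.card).factorial ≤ n.factorial := by
  set A := univ.filter (fun S : Finset (Fin n) => S.Nonempty ∧ ∑ i ∈ S, c i = 1) with hA
  set G : Finset (Fin n) → Finset (Equiv.Perm (Fin n)) := fun S =>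
    univ.filter (fun σ : Equiv.Perm (Fin n) =>
      ((Finset.range S.card).image (fun l : ℕ => σ ((l : Fin n)))) = S ∧
      ∀ i : ℕ, 0 < i → i < S.card → ∑ l ∈ Finset.range i, c (σ (l : Fin n)) ≠ 1) with hG
  have hsumS : ∀ S : Finset (Fin n), ∀ σ : Equiv.Perm (Fin n),
      ((Finset.range S.card).image (fun l : ℕ => σ ((l : Fin n)))) = S →
      ∑ l ∈ Finset.range S.card, c (σ (l : Fin n)) = ∑ i ∈ S, c i := by
    intro S σ him
    conv_rhs => rw [← him]
    rw [Finset.sum_image]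
    intro a ha b hb hab
    have hjn : S.card ≤ n := by simpa using Finset.card_le_card (Finset.subset_univ S)
    rw [Finset.mem_coe, Finset.mem_range] at ha hb
    have h6 := congrArg Fin.val (σ.injective hab)
    rw [Fin.val_natCast, Fin.val_natCast, Nat.mod_eq_of_lt (lt_of_lt_of_le ha hjn),
      Nat.mod_eq_of_lt (lt_of_lt_of_le hb hjn)] at h6
    exact h6
  have hdisj : ∀ S ∈ A, ∀ T ∈ A, S ≠ T → Disjoint (G S) (G T) := by
    intro S hS T hT hST
    rw [Finset.disjoint_left]
    intro σ hσS hσT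
    rw [hG, Finset.mem_filter] at hσS hσT
    rw [hA, Finset.mem_filter] at hS hT
    obtain ⟨-, hSne, hcSsum⟩ := hS
    obtain ⟨-, hTne, hcTsum⟩ := hT
    -- show S.card = T.card leads to S = T; otherwise contradiction with prefix conditions
    rcases lt_trichotomy S.card T.card with h | h | h
    · have hSpos : 0 < S.card := Finset.card_pos.2 hSne
      have := hσT.2.2 S.card hSpos h
      exact this ((hsumS S σ hσS.2.1).trans hcSsum)
    · apply hST
      rw [← hσS.2.1, ← hσT.2.1, h]
    · have hTpos : 0 < T.card := Finset.card_pos.2 hTne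
      have := hσS.2.2 T.card hTpos h
      exact this ((hsumS T σ hσT.2.1).trans hcTsum)
  calc ∑ S ∈ A, (S.card - 1).factorial * (n - S.card).factorial
      ≤ ∑ S ∈ A, (G S).card := by
        apply Finset.sum_le_sum
        intro S hSA
        rw [hA, Finset.mem_filter] at hSA
        exact blockCount n c S hSA.2.1 hSA.2.2
    _ = (A.biUnion G).card := (Finset.card_biUnion hdisj).symm
    _ ≤ (univ : Finset (Equiv.Perm (Fin n))).card := Finset.card_le_card (Finset.subset_univ _)
    _ = n.factorial := by rw [Finset.card_univ, Fintype.card_perm, Fintype.card_fin]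

open Classical in
lemma keyA (n : ℕ) [NeZero n] (c : Fin n → ℝ) :
    ∑ S ∈ univ.filter (fun S : Finset (Fin n) => S.Nonempty ∧ ∑ i ∈ S, c i = 1),
      (((S.card - 1).factorial * (n - S.card).factorial : ℕ) : ℝ) / (n.factorial : ℝ) ≤ 1 := by
  rw [← Finset.sum_div]
  rw [div_le_one (by positivity)]
  rw [← Nat.cast_sum]
  exact_mod_cast keyA_nat n c

open Classical in
lemma sum_wR (n : ℕ) [NeZero n] :
    ∑ S ∈ univ.filter (fun S : Finset (Fin n) => S.Nonempty),
      (((S.card - 1).factorial * (n - S.card).factorial : ℕ) : ℝ) / (n.factorial : ℝ)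
      = harmonicR n := by
  have hn0 : 0 < n := Nat.pos_of_ne_zero (NeZero.ne n)
  rw [Finset.sum_filter]
  have huniv : (univ : Finset (Finset (Fin n))) = (univ : Finset (Fin n)).powerset :=
    Finset.powerset_univ.symm
  rw [huniv, Finset.sum_powerset]
  have hcard : (univ : Finset (Fin n)).card = n := by simp
  rw [hcard]
  have hstep : ∀ j ∈ Finset.range (n+1),
      (∑ S ∈ Finset.powersetCard j (univ : Finset (Fin n)),
        if S.Nonempty then (((S.card - 1).factorial * (n - S.card).factorial : ℕ) : ℝ) / (n.factorial : ℝ) else 0)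
      = if j = 0 then 0 else (n.choose j : ℝ) * (((j - 1).factorial * (n - j).factorial : ℕ) : ℝ) / (n.factorial : ℝ) := by
    intro j hj
    rcases Nat.eq_zero_or_pos j with rfl | hjpos
    · simp [Finset.powersetCard_zero]
    · rw [if_neg hjpos.ne']
      have : ∀ S ∈ Finset.powersetCard j (univ : Finset (Fin n)),
          (if S.Nonempty then (((S.card - 1).factorial * (n - S.card).factorial : ℕ) : ℝ) / (n.factorial : ℝ) else 0)
          = (((j - 1).factorial * (n - j).factorial : ℕ) : ℝ) / (n.factorial : ℝ) := by
        intro S hS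
        have hcardS : S.card = j := (Finset.mem_powersetCard.1 hS).2
        rw [if_pos (Finset.card_pos.1 (hcardS ▸ hjpos)), hcardS]
      rw [Finset.sum_congr rfl this, Finset.sum_const, Finset.card_powersetCard, hcard]
      rw [nsmul_eq_mul, mul_div_assoc]
  rw [Finset.sum_congr rfl hstep]
  have hterm : ∀ j ∈ Finset.range (n+1), (if j = 0 then (0:ℝ) else
      (n.choose j : ℝ) * (((j - 1).factorial * (n - j).factorial : ℕ) : ℝ) / (n.factorial : ℝ))
      = if j = 0 then 0 else 1 / (j : ℝ) := by
    intro j hj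
    rcases Nat.eq_zero_or_pos j with rfl | hjpos
    · simp
    · rw [if_neg hjpos.ne', if_neg hjpos.ne']
      rw [Finset.mem_range] at hj
      have hjn : j ≤ n := by omega
      have hkey : (j : ℕ) * (n.choose j * ((j-1).factorial * (n-j).factorial)) = n.factorial := by
        have h1 : j * (j-1).factorial = j.factorial := by
          cases j with
          | zero => omega
          | succ m => simp [Nat.factorial_succ]
        calc j * (n.choose j * ((j-1).factorial * (n-j).factorial))
            = n.choose j * (j * (j-1).factorial) * (n-j).factorial := by ring
          _ = n.choose j * j.factorial * (n-j).factorial := by rw [h1]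
          _ = n.factorial := Nat.choose_mul_factorial_mul_factorial hjn
      have hj0 : (j : ℝ) ≠ 0 := Nat.cast_ne_zero.2 hjpos.ne'
      have hfac0 : (n.factorial : ℝ) ≠ 0 := Nat.cast_ne_zero.2 n.factorial_ne_zero
      rw [div_eq_div_iff (by positivity) (by positivity)]
      have := congrArg (fun m : ℕ => (m : ℝ)) hkey
      push_cast at this ⊢
      linear_combination this
  rw [Finset.sum_congr rfl hterm]
  rw [harmonicR]
  rw [Finset.sum_range_succ']
  have hlast : ∀ i ∈ Finset.range n, (if i + 1 = 0 then (0:ℝ) else 1/((i+1 : ℕ) : ℝ)) = 1/((i:ℝ)+1) := by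
    intro i hi
    rw [if_neg (Nat.succ_ne_zero i)]
    push_cast
    ring
  rw [Finset.sum_congr rfl hlast]
  simp

open Classical in
lemma cover_bound (n k : ℕ) [NeZero n] (C : Multiset (Fin n → ℝ))
    (hcov : ∀ x : Fin n → ℝ, (∀ i, x i = 0 ∨ x i = 1) → x ≠ 0 →
      k ≤ Multiset.card (C.filter (fun c => ∑ i, c i * x i = 1))) :
    harmonicR n * k ≤ (Multiset.card C : ℝ) := by
  have hw0 : ∀ j : ℕ, (0:ℝ) ≤ (((j - 1).factorial * (n - j).factorial : ℕ) : ℝ) / (n.factorial : ℝ) :=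
    fun j => by positivity
  set W : (Fin n → ℝ) → ℝ := fun c => ∑ S ∈ univ.filter
      (fun S : Finset (Fin n) => S.Nonempty ∧ ∑ i ∈ S, c i = 1),
      (((S.card - 1).factorial * (n - S.card).factorial : ℕ) : ℝ) / (n.factorial : ℝ) with hW
  have hcovS : ∀ S : Finset (Fin n), S.Nonempty →
      (k : ℝ) ≤ (Multiset.card (C.filter (fun c => ∑ i ∈ S, c i = 1)) : ℝ) := by
    intro S hSne
    set x : Fin n → ℝ := fun i => if i ∈ S then 1 else 0 with hx
    have h01 : ∀ i, x i = 0 ∨ x i = 1 := by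
      intro i; rw [hx]; by_cases h : i ∈ S <;> simp [h]
    have hx0 : x ≠ 0 := by
      obtain ⟨i, hi⟩ := hSne
      intro hcon
      have : x i = 0 := congrFun hcon i
      rw [hx] at this
      simp [hi] at this
    have hk := hcov x h01 hx0
    have hfeq : C.filter (fun c => ∑ i, c i * x i = 1) = C.filter (fun c => ∑ i ∈ S, c i = 1) := by
      apply Multiset.filter_congr
      intro c _
      have : ∑ i, c i * x i = ∑ i ∈ S, c i := by
        rw [hx]
        simp only [mul_ite, mul_one, mul_zero]
        rw [Finset.sum_ite_mem, Finset.univ_inter]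
      rw [this]
    rw [hfeq] at hk
    exact_mod_cast hk
  have hswap : ∀ D : Multiset (Fin n → ℝ),
      ∑ S ∈ univ.filter (fun S : Finset (Fin n) => S.Nonempty),
        (((S.card - 1).factorial * (n - S.card).factorial : ℕ) : ℝ) / (n.factorial : ℝ)
          * (Multiset.card (D.filter (fun c => ∑ i ∈ S, c i = 1)) : ℝ)
      = (D.map W).sum := by
    intro D
    induction D using Multiset.induction_on with
    | empty => simp
    | cons a D ih =>
      rw [Multiset.map_cons, Multiset.sum_cons, ← ih]
      have hterm : ∀ S ∈ univ.filter (fun S : Finset (Fin n) => S.Nonempty),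
          (((S.card - 1).factorial * (n - S.card).factorial : ℕ) : ℝ) / (n.factorial : ℝ)
            * (Multiset.card ((a ::ₘ D).filter (fun c => ∑ i ∈ S, c i = 1)) : ℝ)
          = (if ∑ i ∈ S, a i = 1 then
              (((S.card - 1).factorial * (n - S.card).factorial : ℕ) : ℝ) / (n.factorial : ℝ) else 0)
            + (((S.card - 1).factorial * (n - S.card).factorial : ℕ) : ℝ) / (n.factorial : ℝ)
              * (Multiset.card (D.filter (fun c => ∑ i ∈ S, c i = 1)) : ℝ) := by
        intro S _
        rw [Multiset.filter_cons]
        by_cases h : ∑ i ∈ S, a i = 1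
        · rw [if_pos h, if_pos h]
          simp only [Multiset.card_add, Multiset.card_singleton]
          push_cast
          ring
        · rw [if_neg h, if_neg h]
          rw [zero_add, zero_add]
      rw [Finset.sum_congr rfl hterm, Finset.sum_add_distrib]
      congr 1
      rw [hW]
      simp only
      rw [← Finset.sum_filter, Finset.filter_filter]
  have hWle : ∀ c : Fin n → ℝ, W c ≤ 1 := fun c => keyA n c
  calc harmonicR n * k
      = ∑ S ∈ univ.filter (fun S : Finset (Fin n) => S.Nonempty),
          (((S.card - 1).factorial * (n - S.card).factorial : ℕ) : ℝ) / (n.factorial : ℝ) * k := by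
        rw [← Finset.sum_mul, sum_wR]
    _ ≤ ∑ S ∈ univ.filter (fun S : Finset (Fin n) => S.Nonempty),
          (((S.card - 1).factorial * (n - S.card).factorial : ℕ) : ℝ) / (n.factorial : ℝ)
            * (Multiset.card (C.filter (fun c => ∑ i ∈ S, c i = 1)) : ℝ) := by
        apply Finset.sum_le_sum
        intro S hS
        rw [Finset.mem_filter] at hS
        exact mul_le_mul_of_nonneg_left (hcovS S hS.2) (hw0 S.card)
    _ = (C.map W).sum := hswap C
    _ ≤ (C.map (fun _ => (1:ℝ))).sum := by
        apply Multiset.sum_map_le_sum_map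
        intro c _
        exact hWle c
    _ = (Multiset.card C : ℝ) := by
        simp [Multiset.map_const']

theorem lp_lower_bound (n k : ℕ) (hn : 1 ≤ n) (hk : 1 ≤ k) :
    (⌈harmonicR n * (k : ℝ)⌉ : ℤ) ≤ (coverNumber n k : ℤ) := by
  haveI : NeZero n := ⟨by omega⟩
  classical
  -- the defining set is nonempty
  have hnonempty : {m | ∃ C : Multiset (Fin n → ℝ),
      Multiset.card C = m ∧
      ∀ x : Fin n → ℝ, (∀ i, x i = 0 ∨ x i = 1) → x ≠ 0 →
        k ≤ Multiset.card (C.filter (fun c => ∑ i, c i * x i = 1))}.Nonempty := by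
    set C₀ : Multiset (Fin n → ℝ) :=
      k • ((Finset.Icc 1 n).val.map (fun j : ℕ => (fun _ : Fin n => ((j:ℝ))⁻¹))) with hC₀
    refine ⟨Multiset.card C₀, C₀, rfl, ?_⟩
    intro x h01 hx0
    set S := univ.filter (fun i => x i = 1) with hS
    set j0 := S.card with hj0
    have hj0pos : 0 < j0 := by
      rw [hj0, Finset.card_pos]
      by_contra hcon
      rw [Finset.not_nonempty_iff_eq_empty] at hcon
      apply hx0
      funext i
      rcases h01 i with h | h
      · exact h
      · exfalso
        have : i ∈ S := by rw [hS]; simp [h]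
        rw [hcon] at this
        simp at this
    have hj0n : j0 ≤ n := by
      rw [hj0]
      simpa using Finset.card_le_card (Finset.subset_univ S)
    set c0 : Fin n → ℝ := fun _ => ((j0:ℝ))⁻¹ with hc0
    have hp : ∑ i, c0 i * x i = 1 := by
      have hsx : ∑ i, x i = (j0 : ℝ) := by
        have : ∀ i, x i = if x i = 1 then (1:ℝ) else 0 := by
          intro i
          rcases h01 i with h | h <;> simp [h]
        rw [Finset.sum_congr rfl (fun i _ => this i)]
        rw [Finset.sum_boole, hj0, hS]
      rw [hc0]
      simp only
      rw [← Finset.mul_sum, hsx]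
      rw [inv_mul_cancel₀ (Nat.cast_ne_zero.2 hj0pos.ne')]
    have hmem : c0 ∈ (Finset.Icc 1 n).val.map (fun j : ℕ => (fun _ : Fin n => ((j:ℝ))⁻¹)) := by
      rw [Multiset.mem_map]
      exact ⟨j0, by rw [Finset.mem_val, Finset.mem_Icc]; omega, rfl⟩
    have hcount : k ≤ C₀.count c0 := by
      rw [hC₀, Multiset.count_nsmul]
      have : 1 ≤ Multiset.count c0 ((Finset.Icc 1 n).val.map (fun j : ℕ => (fun _ : Fin n => ((j:ℝ))⁻¹))) :=
        Multiset.one_le_count_iff_mem.2 hmem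
      calc k = k * 1 := (mul_one k).symm
        _ ≤ k * _ := Nat.mul_le_mul_left k this
    calc k ≤ C₀.count c0 := hcount
      _ = Multiset.card (C₀.filter (fun c => c = c0)) := by
          rw [Multiset.count_eq_card_filter_eq]
          congr 1
          apply Multiset.filter_congr
          intro c _
          exact ⟨fun h => h.symm, fun h => h.symm⟩
      _ ≤ Multiset.card (C₀.filter (fun c => ∑ i, c i * x i = 1)) := by
          apply Multiset.card_le_card
          apply Multiset.monotone_filter_right
          intro c hc
          rw [hc]
          exact hp
  have hmem : coverNumber n k ∈ {m | ∃ C : Multiset (Fin n → ℝ),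
      Multiset.card C = m ∧
      ∀ x : Fin n → ℝ, (∀ i, x i = 0 ∨ x i = 1) → x ≠ 0 →
        k ≤ Multiset.card (C.filter (fun c => ∑ i, c i * x i = 1))} := by
    rw [coverNumber]
    exact Nat.sInf_mem hnonempty
  obtain ⟨C, hcard, hcov⟩ := hmem
  rw [Int.ceil_le]
  push_cast
  rw [← hcard]
  exact cover_bound n k C hcov
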